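/- Let N be a network, N' the network obtained by adding a super-source S' connected to the old source S by μ(N) parallel edges, and A an alphabet. If (A^{μ(N)}, F) is an unambiguous pair for (N', A), where F includes a function F_S : A^{μ(N)} → A^{|out(S)|} at the old source S, then (C, F \ {F_S'}) is an unambiguous pair for (N, A), where C = { F_S(x) : x ∈ A^{μ(N)} }. In particular C has size |A|^{μ(N)} and the one-shot capacity of (N, A) equals μ(N). -/

import Mathlib

/-- A (single-source multicast) network: a directed multigraph with edge set `E`,
vertex set `V`, tail/head maps, a source `S` and a set of terminals `T`. -/
structure Network (V E : Type) where
  tl : E → V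
  hd : E → V
  S : V
  T : Set V

namespace Network

variable {V E A : Type}

/-- The outgoing edges of a vertex. -/
def outE (N : Network V E) (v : V) : Set E := {e | N.tl e = v}

/-- The incoming edges of a vertex. -/
def inE (N : Network V E) (v : V) : Set E := {e | N.hd e = v}

/-- The network is acyclic: no directed cycle through the vertices. -/
def Acyclic (N : Network V E) : Prop :=
  ∀ v : V, ¬ Relation.TransGen (fun a b : V => ∃ e, N.tl e = a ∧ N.hd e = b) v v

/-- `p` is a (nonempty) directed path of edges from vertex `u` to vertex `v`. -/
def IsPath (N : Network V E) (u v : V) (p : List E) : Prop :=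
  p ≠ [] ∧ (∀ e ∈ p.head?, N.tl e = u) ∧ (∀ e ∈ p.getLast?, N.hd e = v) ∧
    p.Chain' (fun e e' => N.hd e = N.tl e')

/-- A set of edges is a `u`-`v` cut if every directed path from `u` to `v` meets it. -/
def IsCut (N : Network V E) (u v : V) (F : Set E) : Prop :=
  ∀ p : List E, N.IsPath u v p → ∃ e ∈ p, e ∈ F

/-- The minimum size of an edge cut between `u` and `v`. -/
noncomputable def minCut (N : Network V E) (u v : V) : ℕ :=
  sInf {n | ∃ F : Finset E, F.card = n ∧ N.IsCut u v ↑F}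

/-- `μ(N)`: the minimum over all terminals of the source-terminal min-cut. -/
noncomputable def mu (N : Network V E) : ℕ :=
  sInf {n | ∃ t ∈ N.T, N.minCut N.S t = n}

/-- A network code: a local processing function at every vertex, mapping the
incoming alphabet symbols to the outgoing alphabet symbols. -/
def Code (N : Network V E) (A : Type) : Type :=
  ∀ v : V, (N.inE v → A) → (N.outE v → A)

/-- An edge labelling `ℓ` is consistent with the network code `F` and the source
output `s`: the source emits `s`, and each intermediate vertex applies its local rule. -/
def Consistent (N : Network V E) (F : N.Code A) (s : N.outE N.S → A) (ℓ : E → A) : Prop :=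
  (∀ e : N.outE N.S, ℓ ↑e = s e) ∧
    ∀ v : V, v ≠ N.S → v ∉ N.T → ∀ e : N.outE v, ℓ ↑e = F v (fun e' => ℓ ↑e') e

/-- The pair `(C, F)` of an outer code and a network code is unambiguous:
every terminal can uniquely recover the codeword from its incoming symbols. -/
def Unambiguous (N : Network V E) (F : N.Code A) (C : Set (N.outE N.S → A)) : Prop :=
  ∀ t ∈ N.T, ∀ c ∈ C, ∀ c' ∈ C, ∀ ℓ ℓ' : E → A,
    N.Consistent F c ℓ → N.Consistent F c' ℓ' →
      (∀ e : N.inE t, ℓ ↑e = ℓ' ↑e) → c = c'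

/-- The one-shot capacity of a network with respect to the alphabet `A`. -/
noncomputable def C1 (N : Network V E) (A : Type) [Fintype A] : ℝ :=
  sSup {x : ℝ | ∃ (C : Set (N.outE N.S → A)) (F : N.Code A),
    C.Nonempty ∧ N.Unambiguous F C ∧ x = Real.logb (Fintype.card A) C.ncard}

/-- The one-shot linear capacity of a network with respect to the field `A`. -/
noncomputable def C1lin (N : Network V E) (A : Type) [Field A] [Fintype A] : ℝ :=
  sSup {x : ℝ | ∃ (C : Set (N.outE N.S → A)) (F : N.Code A),
    C.Nonempty ∧ (∀ v, IsLinearMap A (F v)) ∧ N.Unambiguous F C ∧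
      x = Real.logb (Fintype.card A) C.ncard}

/-- The network obtained by adding a super-source `S' = none` joined to the old
source by `k` parallel edges. -/
def addSuper (N : Network V E) (k : ℕ) : Network (Option V) (E ⊕ Fin k) where
  tl := Sum.elim (fun e => some (N.tl e)) (fun _ => none)
  hd := Sum.elim (fun e => some (N.hd e)) (fun _ => some N.S)
  S := none
  T := some '' N.T

end Network

namespace Network

variable {V E A : Type}

/-- Restriction of a network code for `N' = N.addSuper k` to a network code for `N`. -/
noncomputable def restrictCode (N : Network V E) (k : ℕ) [Nonempty A]
    (F' : (N.addSuper k).Code A) : N.Code A :=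
  fun v x e =>
    F' (some v)
      (fun e' =>
        match e' with
        | ⟨Sum.inl e'', h⟩ => x ⟨e'', by simpa [Network.addSuper, Network.inE] using h⟩
        | ⟨Sum.inr _, _⟩ => Classical.arbitrary A)
      ⟨Sum.inl e.1, by simpa [Network.addSuper, Network.outE] using congrArg some e.2⟩

/-- The codeword of `N` obtained by applying the local function of the old source
`S` (inside `N' = N.addSuper k`) to a source word `s ∈ A^k` of the super-source. -/
noncomputable def sourceWord (N : Network V E) (k : ℕ) [Nonempty A]
    (F' : (N.addSuper k).Code A)
    (s : (N.addSuper k).outE (N.addSuper k).S → A) : N.outE N.S → A :=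
  fun e =>
    F' (some N.S)
      (fun e' =>
        match e' with
        | ⟨Sum.inl _, _⟩ => Classical.arbitrary A
        | ⟨Sum.inr i, _⟩ => s ⟨Sum.inr i, by simp [Network.addSuper, Network.outE]⟩)
      ⟨Sum.inl e.1, by simpa [Network.addSuper, Network.outE] using congrArg some e.2⟩

end Network
namespace Network

variable {V E A : Type}

/-- Edge influence relation: `e'` feeds into `e`. -/
def estep (N : Network V E) : E → E → Prop := fun e' e => N.hd e' = N.tl e

lemma wf_estep [Finite E] (N : Network V E) (h : N.Acyclic) :
    WellFounded (Relation.TransGen N.estep) := by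
  have key : ∀ {e' e : E}, Relation.TransGen N.estep e' e →
      Relation.TransGen (fun a b : V => ∃ f, N.tl f = a ∧ N.hd f = b) (N.tl e') (N.tl e) := by
    intro e' e hte
    induction hte with
    | single h1 => exact Relation.TransGen.single ⟨_, rfl, h1⟩
    | tail _ h2 ih => exact ih.trans (Relation.TransGen.single ⟨_, rfl, h2⟩)
  have : IsIrrefl E (Relation.TransGen N.estep) := ⟨fun e he => h _ (key he)⟩
  exact Finite.wellFounded_of_trans_of_irrefl _

open Classical in
/-- Canonical labelling determined by a network code and a source word. -/
noncomputable def canon [Nonempty A] [Finite E] (N : Network V E) (hac : N.Acyclic)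
    (F : N.Code A) (s : N.outE N.S → A) : E → A :=
  (N.wf_estep hac).fix fun e ih =>
    if h : N.tl e = N.S then s ⟨e, h⟩
    else if N.tl e ∈ N.T then Classical.arbitrary A
    else F (N.tl e) (fun e' => ih e'.1 (Relation.TransGen.single e'.2)) ⟨e, rfl⟩

open Classical in
lemma canon_eq [Nonempty A] [Finite E] (N : Network V E) (hac : N.Acyclic)
    (F : N.Code A) (s : N.outE N.S → A) (e : E) :
    canon N hac F s e =
      if h : N.tl e = N.S then s ⟨e, h⟩
      else if N.tl e ∈ N.T then Classical.arbitrary A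
      else F (N.tl e) (fun e' => canon N hac F s e'.1) ⟨e, rfl⟩ := by
  unfold canon
  rw [WellFounded.fix_eq]

lemma canon_consistent [Nonempty A] [Finite E] (N : Network V E) (hac : N.Acyclic)
    (hST : N.S ∉ N.T) (F : N.Code A) (s : N.outE N.S → A) :
    N.Consistent F s (canon N hac F s) := by
  constructor
  · rintro ⟨e, he⟩
    have he' : N.tl e = N.S := he
    show canon N hac F s e = _
    rw [canon_eq, dif_pos he']
  · rintro v hvS hvT ⟨e, he⟩
    have he' : N.tl e = v := he
    subst he'
    show canon N hac F s e = _
    rw [canon_eq, dif_neg hvS, if_neg hvT]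

end Network
namespace Network

variable {V E A : Type}

lemma addSuper_acyclic (N : Network V E) (k : ℕ) (h : N.Acyclic) :
    (N.addSuper k).Acyclic := by
  intro w hw
  have key : ∀ (u : V) (b : Option V),
      Relation.TransGen (fun a b : Option V =>
        ∃ e, (N.addSuper k).tl e = a ∧ (N.addSuper k).hd e = b) (some u) b →
      ∃ v, b = some v ∧ Relation.TransGen (fun a b : V => ∃ f, N.tl f = a ∧ N.hd f = b) u v := by
    intro u b hab
    induction hab with
    | single h1 =>
      obtain ⟨e, he1, he2⟩ := h1
      cases e with
      | inl f =>
        exact ⟨N.hd f, he2.symm, Relation.TransGen.single ⟨f, Option.some_injective _ he1, rfl⟩⟩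
      | inr i => exact absurd he1 (by simp [Network.addSuper])
    | tail _ h2 ih =>
      obtain ⟨v, rfl, hv⟩ := ih
      obtain ⟨e, he1, he2⟩ := h2
      cases e with
      | inl f =>
        exact ⟨N.hd f, he2.symm, hv.tail ⟨f, Option.some_injective _ he1, rfl⟩⟩
      | inr i => exact absurd he1 (by simp [Network.addSuper])
  cases w with
  | none =>
    cases hw with
    | single h1 =>
      obtain ⟨e, _, he2⟩ := h1
      cases e <;> simp [Network.addSuper] at he2
    | tail _ h2 =>
      obtain ⟨e, _, he2⟩ := h2
      cases e <;> simp [Network.addSuper] at he2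
  | some u =>
    obtain ⟨v, hv, hcyc⟩ := key u _ hw
    obtain rfl : u = v := Option.some_injective _ hv
    exact h u hcyc

lemma addSuper_S_not_T (N : Network V E) (k : ℕ) :
    (N.addSuper k).S ∉ (N.addSuper k).T := by
  rintro ⟨u, -, hu⟩
  exact Option.some_ne_none u hu

end Network
namespace Network

variable {V E A : Type}

/-- Lifting a consistent labelling of `N` to one of `N.addSuper k`. -/
lemma lift_consistent [Nonempty A] {k : ℕ} (N : Network V E)
    (hS : ∀ e, N.hd e ≠ N.S)
    (F' : (N.addSuper k).Code A) (s : (N.addSuper k).outE (N.addSuper k).S → A)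
    {ℓ : E → A}
    (hc : N.Consistent (N.restrictCode k F') (N.sourceWord k F' s) ℓ) :
    (N.addSuper k).Consistent F' s
      (Sum.elim ℓ (fun i => s ⟨Sum.inr i, rfl⟩)) := by
  constructor
  · rintro ⟨e, he⟩
    cases e with
    | inl f => exact absurd he (Option.some_ne_none (N.tl f))
    | inr i => rfl
  · rintro v hvS hvT ⟨e, he⟩
    cases e with
    | inr i => exact absurd he.symm hvS
    | inl f =>
      by_cases hfS : N.tl f = N.S
      · -- vertex is the old source
        have hv : v = some N.S := he.symm.trans (congrArg some hfS)
        subst hv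
        have h1 : ℓ f = N.sourceWord k F' s ⟨f, hfS⟩ := hc.1 ⟨f, hfS⟩
        have h2 : N.sourceWord k F' s ⟨f, hfS⟩ =
            F' (some N.S)
              (fun e' => Sum.elim ℓ (fun i => s ⟨Sum.inr i, rfl⟩) ↑e')
              ⟨Sum.inl f, he⟩ := by
          refine congrFun (congrArg (F' (some N.S)) (funext fun e' => ?_)) _
          obtain ⟨e', h'⟩ := e'
          cases e' with
          | inl g => exact absurd (Option.some_injective _ h') (hS g)
          | inr i => rfl
        exact h1.trans h2
      · subst he
        have hfT : N.tl f ∉ N.T := fun hh => hvT ⟨_, hh, rfl⟩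
        have base : ℓ f = N.restrictCode k F' (N.tl f) (fun e' => ℓ ↑e') ⟨f, rfl⟩ :=
          hc.2 (N.tl f) hfS hfT ⟨f, rfl⟩
        have diff : N.restrictCode k F' (N.tl f) (fun e' => ℓ ↑e') ⟨f, rfl⟩ =
            F' (some (N.tl f))
              (fun e' => Sum.elim ℓ (fun i => s ⟨Sum.inr i, rfl⟩) ↑e')
              ⟨Sum.inl f, rfl⟩ := by
          refine congrFun (congrArg (F' (some (N.tl f))) (funext fun e' => ?_)) _
          obtain ⟨e', h'⟩ := e'
          cases e' with
          | inl g => rfl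
          | inr i => exact absurd (Option.some_injective _ h').symm hfS
        exact base.trans diff

end Network
namespace Network

variable {V E A : Type}

/-- Replacing the source word of a consistent labelling of `N.addSuper k`, provided
the two source words induce the same codeword at the old source. -/
lemma modify_consistent [Nonempty A] {k : ℕ} (N : Network V E)
    (hS : ∀ e, N.hd e ≠ N.S)
    (F' : (N.addSuper k).Code A) (s s' : (N.addSuper k).outE (N.addSuper k).S → A)
    (hss' : N.sourceWord k F' s = N.sourceWord k F' s')
    {L : (E ⊕ Fin k) → A}
    (hc : (N.addSuper k).Consistent F' s L) :
    (N.addSuper k).Consistent F' s'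
      (Sum.elim (fun f => L (Sum.inl f)) (fun i => s' ⟨Sum.inr i, rfl⟩)) := by
  constructor
  · rintro ⟨e, he⟩
    cases e with
    | inl f => exact absurd he (Option.some_ne_none (N.tl f))
    | inr i => rfl
  · rintro v hvS hvT ⟨e, he⟩
    cases e with
    | inr i => exact absurd he.symm hvS
    | inl f =>
      by_cases hfS : N.tl f = N.S
      · have hv : v = some N.S := he.symm.trans (congrArg some hfS)
        subst hv
        have base : L (Sum.inl f) = F' (some N.S) (fun e' => L ↑e') ⟨Sum.inl f, he⟩ :=
          hc.2 (some N.S) (fun hh => Option.some_ne_none _ hh) hvT ⟨Sum.inl f, he⟩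
        have step2 : F' (some N.S) (fun e' => L ↑e') ⟨Sum.inl f, he⟩ =
            N.sourceWord k F' s ⟨f, hfS⟩ := by
          refine congrFun (congrArg (F' (some N.S)) (funext fun e' => ?_)) _
          obtain ⟨e', h'⟩ := e'
          cases e' with
          | inl g => exact absurd (Option.some_injective _ h') (hS g)
          | inr i => exact hc.1 ⟨Sum.inr i, rfl⟩
        have step3 : N.sourceWord k F' s ⟨f, hfS⟩ = N.sourceWord k F' s' ⟨f, hfS⟩ :=
          congrFun hss' _
        have step4 : N.sourceWord k F' s' ⟨f, hfS⟩ =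
            F' (some N.S)
              (fun e' => Sum.elim (fun f => L (Sum.inl f)) (fun i => s' ⟨Sum.inr i, rfl⟩) ↑e')
              ⟨Sum.inl f, he⟩ := by
          refine congrFun (congrArg (F' (some N.S)) (funext fun e' => ?_)) _
          obtain ⟨e', h'⟩ := e'
          cases e' with
          | inl g => exact absurd (Option.some_injective _ h') (hS g)
          | inr i => rfl
        exact base.trans (step2.trans (step3.trans step4))
      · have base : L (Sum.inl f) = F' v (fun e' => L ↑e') ⟨Sum.inl f, he⟩ :=
          hc.2 v hvS hvT ⟨Sum.inl f, he⟩
        have diff : F' v (fun e' => L ↑e') ⟨Sum.inl f, he⟩ =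
            F' v
              (fun e' => Sum.elim (fun f => L (Sum.inl f)) (fun i => s' ⟨Sum.inr i, rfl⟩) ↑e')
              ⟨Sum.inl f, he⟩ := by
          refine congrFun (congrArg (F' v) (funext fun e' => ?_)) _
          obtain ⟨e', h'⟩ := e'
          cases e' with
          | inl g => rfl
          | inr i =>
            exact absurd (Option.some_injective _ (h'.trans he.symm)).symm hfS
        exact base.trans diff

end Network
namespace Network

variable {V E A : Type}

lemma unamb_restrict [Nonempty A] {k : ℕ} (N : Network V E)
    (hST : N.S ∉ N.T) (hS : ∀ e, N.hd e ≠ N.S)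
    (F' : (N.addSuper k).Code A)
    (hF' : (N.addSuper k).Unambiguous F' Set.univ) :
    N.Unambiguous (N.restrictCode k F') (Set.range (N.sourceWord k F')) := by
  rintro t ht c ⟨s, rfl⟩ c' ⟨s', rfl⟩ ℓ ℓ' hc hc' hagree
  have h1 := N.lift_consistent hS F' s hc
  have h2 := N.lift_consistent hS F' s' hc'
  have hs : s = s' := by
    refine hF' (some t) ⟨t, ht, rfl⟩ s (Set.mem_univ _) s' (Set.mem_univ _) _ _ h1 h2 ?_
    rintro ⟨e, he⟩
    cases e with
    | inl f => exact hagree ⟨f, Option.some_injective _ he⟩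
    | inr i =>
      have hts : N.S = t := Option.some_injective _ he
      exact absurd (hts ▸ ht) hST
  rw [hs]

lemma sourceWord_injective [Nonempty A] [Finite E] {k : ℕ} (N : Network V E)
    (hac : N.Acyclic) (hT : N.T.Nonempty) (hST : N.S ∉ N.T) (hS : ∀ e, N.hd e ≠ N.S)
    (F' : (N.addSuper k).Code A)
    (hF' : (N.addSuper k).Unambiguous F' Set.univ) :
    Function.Injective (N.sourceWord k F') := by
  intro s s' hss'
  obtain ⟨t, ht⟩ := hT
  have hac' := N.addSuper_acyclic k hac
  have hLc : (N.addSuper k).Consistent F' s (canon (N.addSuper k) hac' F' s) :=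
    canon_consistent _ hac' (N.addSuper_S_not_T k) F' s
  have hL'c := N.modify_consistent hS F' s s' hss' hLc
  refine hF' (some t) ⟨t, ht, rfl⟩ s (Set.mem_univ _) s' (Set.mem_univ _) _ _ hLc hL'c ?_
  rintro ⟨e, he⟩
  cases e with
  | inl f => rfl
  | inr i =>
    have hts : N.S = t := Option.some_injective _ he
    exact absurd (hts ▸ ht) hST

end Network
namespace Network

variable {V E A : Type}

lemma ncard_range_sourceWord [Nonempty A] [Fintype E] [Fintype A] {k : ℕ} (N : Network V E)
    (F' : (N.addSuper k).Code A)
    (hinj : Function.Injective (N.sourceWord k F')) :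
    (Set.range (N.sourceWord k F')).ncard = Fintype.card A ^ k := by
  have hset : (N.addSuper k).outE (N.addSuper k).S
      = Set.range (Sum.inr : Fin k → E ⊕ Fin k) := by
    ext e
    cases e <;> simp [Network.addSuper, Network.outE]
  rw [← Nat.card_coe_set_eq, Nat.card_range_of_injective hinj, Nat.card_fun, hset,
    Nat.card_range_of_injective Sum.inr_injective, Nat.card_eq_fintype_card,
    Nat.card_eq_fintype_card, Fintype.card_fin]

/-- Cut-set bound: the size of an unambiguous outer code is at most `|A| ^ μ(N)`. -/
lemma ncard_le_of_unambiguous [Nonempty A] [Fintype E] [Fintype A] (N : Network V E)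
    (hac : N.Acyclic) (hT : N.T.Nonempty) (hST : N.S ∉ N.T)
    {F : N.Code A} {C : Set (N.outE N.S → A)} (hU : N.Unambiguous F C) :
    C.ncard ≤ Fintype.card A ^ N.mu := by
  classical
  -- a terminal achieving μ
  obtain ⟨t0, ht0⟩ := hT
  have hmem : N.mu ∈ {n | ∃ t ∈ N.T, N.minCut N.S t = n} :=
    Nat.sInf_mem ⟨N.minCut N.S t0, t0, ht0, rfl⟩
  obtain ⟨t, ht, hmc⟩ := hmem
  -- a minimum cut
  have hne2 : {n | ∃ Fc : Finset E, Fc.card = n ∧ N.IsCut N.S t ↑Fc}.Nonempty := by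
    refine ⟨(Finset.univ : Finset E).card, Finset.univ, rfl, fun p hp => ?_⟩
    obtain ⟨e, he⟩ := List.exists_mem_of_ne_nil p hp.1
    exact ⟨e, he, by simp⟩
  have hmem2 : N.minCut N.S t ∈ {n | ∃ Fc : Finset E, Fc.card = n ∧ N.IsCut N.S t ↑Fc} :=
    Nat.sInf_mem hne2
  obtain ⟨Fc, hFcard, hFcut⟩ := hmem2
  -- agreement propagates from the cut to the terminal
  have key : ∀ c ∈ C, ∀ c' ∈ C,
      (∀ e ∈ Fc, canon N hac F c e = canon N hac F c' e) →
      ∀ e : E,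
        (e ∈ Fc ∨ ∃ p, N.IsPath (N.tl e) t (e :: p) ∧ ∀ f ∈ e :: p, f ∉ Fc) →
        canon N hac F c e = canon N hac F c' e := by
    intro c _ c' _ hcut e he
    revert he
    refine (N.wf_estep hac).induction (C := fun e =>
        (e ∈ Fc ∨ ∃ p, N.IsPath (N.tl e) t (e :: p) ∧ ∀ f ∈ e :: p, f ∉ Fc) →
        canon N hac F c e = canon N hac F c' e) e ?_
    rintro e ih (heF | ⟨p, hp, hpF⟩)
    · exact hcut e heF
    · rw [canon_eq, canon_eq]
      by_cases h1 : N.tl e = N.S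
      · exfalso
        obtain ⟨f, hf1, hf2⟩ := hFcut (e :: p) (h1 ▸ hp)
        exact hpF f hf1 hf2
      · rw [dif_neg h1, dif_neg h1]
        by_cases h2 : N.tl e ∈ N.T
        · rw [if_pos h2, if_pos h2]
        · rw [if_neg h2, if_neg h2]
          refine congrFun (congrArg (F (N.tl e)) (funext fun e' => ?_)) _
          obtain ⟨e', he'⟩ := e'
          by_cases h3 : e' ∈ Fc
          · exact ih e' (Relation.TransGen.single he') (Or.inl h3)
          · refine ih e' (Relation.TransGen.single he') (Or.inr ⟨e :: p, ?_, ?_⟩)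
            · obtain ⟨-, -, hp3, hp4⟩ := hp
              refine ⟨List.cons_ne_nil _ _, ?_, ?_, List.isChain_cons_cons.2 ⟨he', hp4⟩⟩
              · intro f hf
                rw [List.head?_cons, Option.mem_some_iff] at hf
                subst hf; rfl
              · rw [List.getLast?_cons_cons]
                exact hp3
            · intro f hf
              rcases List.mem_cons.1 hf with rfl | hf
              · exact h3
              · exact hpF f hf
  -- the labelling restricted to the cut determines the codeword
  have hinj : Function.Injective
      (fun c : C => fun e : {e // e ∈ Fc} => canon N hac F c.1 e.1) := by
    rintro ⟨c, hc⟩ ⟨c', hc'⟩ h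
    have hcut : ∀ e ∈ Fc, canon N hac F c e = canon N hac F c' e := fun e he =>
      congrFun h ⟨e, he⟩
    have hagree : ∀ e : ↥(N.inE t), canon N hac F c ↑e = canon N hac F c' ↑e := by
      rintro ⟨e, he⟩
      by_cases h3 : e ∈ Fc
      · exact hcut e h3
      · refine key c hc c' hc' hcut e (Or.inr ⟨[], ⟨List.cons_ne_nil _ _, ?_, ?_, ?_⟩, ?_⟩)
        · intro f hf
          rw [List.head?_cons, Option.mem_some_iff] at hf
          subst hf; rfl
        · intro f hf
          rw [List.getLast?_singleton, Option.mem_some_iff] at hf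
          subst hf; exact he
        · exact List.isChain_singleton _
        · intro f hf
          rcases List.mem_singleton.1 hf with rfl
          exact h3
    exact Subtype.ext (hU t ht c hc c' hc' _ _
      (canon_consistent N hac hST F c) (canon_consistent N hac hST F c') hagree)
  calc C.ncard = Nat.card C := (Nat.card_coe_set_eq C).symm
    _ ≤ Nat.card ({e // e ∈ Fc} → A) := Nat.card_le_card_of_injective _ hinj
    _ = Fintype.card A ^ N.mu := by
        rw [Nat.card_fun, Nat.card_eq_fintype_card, Nat.card_eq_fintype_card,
          Fintype.card_coe, hFcard, hmc]

end Network
open Network in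
/-- Super-source trick: if `(A^{μ(N)}, F')` is unambiguous for the network
`N' = N.addSuper μ(N)` obtained by adding a super-source, then the code
`C = { F_S(x) : x ∈ A^{μ(N)} }` together with the restricted network code is
unambiguous for `N`; in particular `|C| = |A|^{μ(N)}` and the one-shot capacity
of `(N, A)` equals `μ(N)`. -/
theorem supersource_trick {V E A : Type} [Fintype V] [Fintype E] [Fintype A] [Nonempty A]
    (N : Network V E) (hA : 2 ≤ Fintype.card A)
    (hacyclic : N.Acyclic) (hT : N.T.Nonempty) (hST : N.S ∉ N.T)
    (hS : ∀ e, N.hd e ≠ N.S)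
    (F' : (N.addSuper N.mu).Code A)
    (hF' : (N.addSuper N.mu).Unambiguous F' Set.univ) :
    N.Unambiguous (N.restrictCode N.mu F') (Set.range (N.sourceWord N.mu F')) ∧
      (Set.range (N.sourceWord N.mu F')).ncard = Fintype.card A ^ N.mu ∧
      N.C1 A = N.mu := by
  have hinj := N.sourceWord_injective hacyclic hT hST hS F' hF'
  have hunamb := N.unamb_restrict hST hS F' hF'
  have hcard := N.ncard_range_sourceWord F' hinj
  refine ⟨hunamb, hcard, ?_⟩
  have hb1 : (1 : ℝ) < (Fintype.card A : ℝ) := by exact_mod_cast hA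
  show sSup {x : ℝ | ∃ (C : Set (↑(N.outE N.S) → A)) (F : N.Code A),
      C.Nonempty ∧ N.Unambiguous F C ∧ x = Real.logb (Fintype.card A) C.ncard} = (N.mu : ℝ)
  have hmemK : (N.mu : ℝ) ∈ {x : ℝ | ∃ (C : Set (↑(N.outE N.S) → A)) (F : N.Code A),
      C.Nonempty ∧ N.Unambiguous F C ∧ x = Real.logb (Fintype.card A) C.ncard} := by
    refine ⟨_, _, Set.range_nonempty _, hunamb, ?_⟩
    rw [hcard, Nat.cast_pow, Real.logb_pow, Real.logb_self_eq_one hb1, mul_one]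
  have hbdd : ∀ x ∈ {x : ℝ | ∃ (C : Set (↑(N.outE N.S) → A)) (F : N.Code A),
      C.Nonempty ∧ N.Unambiguous F C ∧ x = Real.logb (Fintype.card A) C.ncard},
      x ≤ (N.mu : ℝ) := by
    rintro x ⟨C, F, hCne, hUam, rfl⟩
    have h1 : C.ncard ≤ Fintype.card A ^ N.mu :=
      N.ncard_le_of_unambiguous hacyclic hT hST hUam
    have h2 : 0 < C.ncard := (Set.ncard_pos (Set.toFinite C)).2 hCne
    calc Real.logb (Fintype.card A) C.ncard
        ≤ Real.logb (Fintype.card A) ((Fintype.card A ^ N.mu : ℕ) : ℝ) := by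
          refine (Real.logb_le_logb hb1 ?_ ?_).2 ?_
          · exact_mod_cast h2
          · positivity
          · exact_mod_cast h1
      _ = (N.mu : ℝ) := by
          rw [Nat.cast_pow, Real.logb_pow, Real.logb_self_eq_one hb1, mul_one]
  exact le_antisymm (csSup_le ⟨_, hmemK⟩ hbdd) (le_csSup ⟨_, hbdd⟩ hmemK)
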